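/- With the setup of the Markov jump linear system x(k+1) = αA_{𝒢(k)}x(k), x(0) = 𝟙_n, and 𝒜 = (Pᵀ⊗I_n)(⊕_ℓ A_ℓ): if α·ρ(𝒜) < 1, then the Katz centrality v = ∑_{k=0}^∞ E[x(k)] exists and v = (𝟙_Lᵀ ⊗ I_n)(I_{nL} - α𝒜)^{-1}(ζ_0 ⊗ 𝟙_n), where (ζ_0)_ℓ = P(𝒢(0) = ℓ). -/

import Mathlib

open Matrix MeasureTheory Filter
open scoped ENNReal NNReal

noncomputable def specRad {m : Type*} [Fintype m] [DecidableEq m]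
    (A : Matrix m m ℝ) : ℝ :=
  (spectralRadius ℂ (A.map (algebraMap ℝ ℂ))).toReal

noncomputable def calA {n L : ℕ} (P : Matrix (Fin L) (Fin L) ℝ)
    (A : Fin L → Matrix (Fin n) (Fin n) ℝ) :
    Matrix (Fin L × Fin n) (Fin L × Fin n) ℝ :=
  (Matrix.kroneckerMap (· * ·) Pᵀ (1 : Matrix (Fin n) (Fin n) ℝ)) *
    ((Matrix.blockDiagonal fun ℓ => A ℓ).reindex
      (Equiv.prodComm (Fin n) (Fin L)) (Equiv.prodComm (Fin n) (Fin L)))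

section Neumann
attribute [local instance] Matrix.linftyOpNormedAddCommGroup Matrix.linftyOpNormedRing
  Matrix.linftyOpNormedAlgebra

variable {m : Type*} [Fintype m] [DecidableEq m]

lemma entry_nnnorm_le (M : Matrix m m ℂ) (p q : m) : ‖M p q‖₊ ≤ ‖M‖₊ := by
  rw [Matrix.linfty_opNNNorm_def]
  exact le_trans
    (Finset.single_le_sum (f := fun j => ‖M p j‖₊) (fun i _ => zero_le) (Finset.mem_univ q))
    (Finset.le_sup (f := fun i => ∑ j, ‖M i j‖₊) (Finset.mem_univ p))

lemma summable_entries (B : Matrix m m ℝ) (α : ℝ) (hα : 0 < α)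
    (hρ : α * specRad B < 1) (p q : m) :
    Summable (fun k : ℕ => ((α • B) ^ k) p q) := by
  haveI : Nonempty m := ⟨p⟩
  set a : Matrix m m ℂ := (algebraMap ℝ ℂ).mapMatrix B with ha
  have hfin : spectralRadius ℂ a ≠ ⊤ :=
    ((spectrum.spectralRadius_le_nnnorm a).trans_lt ENNReal.coe_lt_top).ne
  have hρR : specRad B < 1 / α := by
    rw [lt_div_iff₀ hα, mul_comm]; exact hρ
  set r : ℝ := (specRad B + 1 / α) / 2 with hrdef
  have h0ρ : 0 ≤ specRad B := ENNReal.toReal_nonneg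
  have hr1 : specRad B < r := by rw [hrdef]; linarith
  have hr2 : r < 1 / α := by rw [hrdef]; linarith
  have hr0 : 0 < r := lt_of_le_of_lt h0ρ hr1
  have hαr : α * r < 1 := by
    calc α * r < α * (1 / α) := by exact (mul_lt_mul_iff_right₀ hα).2 hr2
    _ = 1 := by field_simp
  have hlt : spectralRadius ℂ a < ENNReal.ofReal r := by
    rw [ENNReal.lt_ofReal_iff_toReal_lt hfin]
    exact hr1
  have hG := spectrum.pow_nnnorm_pow_one_div_tendsto_nhds_spectralRadius a
  have hev : ∀ᶠ k : ℕ in atTop, ((‖a ^ k‖₊ : ℝ≥0∞) ^ (1 / (k : ℝ))) < ENNReal.ofReal r :=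
    hG.eventually_lt_const hlt
  have hbound : ∀ᶠ k : ℕ in atTop, ‖((α • B) ^ k) p q‖ ≤ (α * r) ^ k := by
    filter_upwards [hev, eventually_ge_atTop 1] with k hk hk1
    have hk0 : (0 : ℝ) < (k : ℝ) := by exact_mod_cast hk1
    have h3 : (‖a ^ k‖₊ : ℝ≥0∞) < ENNReal.ofReal (r ^ k) := by
      have h2 := ENNReal.rpow_lt_rpow hk hk0
      rw [← ENNReal.rpow_mul, one_div, inv_mul_cancel₀ hk0.ne', ENNReal.rpow_one] at h2
      calc (‖a ^ k‖₊ : ℝ≥0∞) < ENNReal.ofReal r ^ (k : ℝ) := h2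
        _ = ENNReal.ofReal (r ^ (k : ℝ)) := ENNReal.ofReal_rpow_of_pos hr0
        _ = ENNReal.ofReal (r ^ k) := by rw [Real.rpow_natCast]
    have h4 : ‖a ^ k‖ < r ^ k := by
      have := (ENNReal.lt_ofReal_iff_toReal_lt (by simp : (‖a ^ k‖₊ : ℝ≥0∞) ≠ ⊤)).mp h3
      simpa using this
    have hak : a ^ k = (B ^ k).map (algebraMap ℝ ℂ) := by
      rw [ha, ← map_pow, RingHom.mapMatrix_apply]
    have hentry : |((B ^ k) p q)| ≤ ‖a ^ k‖ := by
      have h5 : ‖(a ^ k) p q‖ ≤ ‖a ^ k‖ := entry_nnnorm_le (a ^ k) p q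
      have h6 : ‖(a ^ k) p q‖ = |(B ^ k) p q| := by
        rw [hak, Matrix.map_apply, norm_algebraMap', Real.norm_eq_abs]
      rwa [h6] at h5
    have hCk : ((α • B) ^ k) p q = α ^ k * (B ^ k) p q := by
      rw [smul_pow]; rfl
    rw [hCk, Real.norm_eq_abs, abs_mul, abs_pow, abs_of_pos hα, mul_pow]
    exact mul_le_mul_of_nonneg_left (hentry.trans h4.le) (by positivity)
  exact Summable.of_norm_bounded_eventually_nat
    (summable_geometric_of_lt_one (by positivity) hαr) hbound

lemma neumann_inv (B : Matrix m m ℝ) (α : ℝ) (hα : 0 < α) (hρ : α * specRad B < 1)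
    (p q : m) :
    HasSum (fun k : ℕ => ((α • B) ^ k) p q) ((1 - α • B)⁻¹ p q) := by
  set C := α • B with hC
  have hsum : ∀ r s : m, Summable fun k : ℕ => (C ^ k) r s := fun r s =>
    summable_entries B α hα hρ r s
  set S : Matrix m m ℝ := Matrix.of fun r s => ∑' k : ℕ, (C ^ k) r s with hS
  have key : (1 - C) * S = 1 := by
    ext p' q'
    rw [Matrix.mul_apply]
    have ha : Summable fun k : ℕ => (C ^ k) p' q' := hsum p' q'
    have ha1 : Summable fun k : ℕ => (C ^ (k + 1)) p' q' := by
      have := (summable_nat_add_iff 1).2 ha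
      simpa using this
    calc ∑ r, (1 - C) p' r * S r q'
        = ∑ r, ∑' k : ℕ, (1 - C) p' r * (C ^ k) r q' :=
          Finset.sum_congr rfl (fun r _ => tsum_mul_left.symm)
      _ = ∑' k : ℕ, ∑ r, (1 - C) p' r * (C ^ k) r q' :=
          (Summable.tsum_finsetSum fun r _ => (hsum r q').mul_left _).symm
      _ = ∑' k : ℕ, ((1 - C) * C ^ k) p' q' := by
          simp_rw [Matrix.mul_apply]
      _ = ∑' k : ℕ, ((C ^ k) p' q' - (C ^ (k + 1)) p' q') := by
          congr 1; funext k
          rw [sub_mul, one_mul, ← pow_succ', Matrix.sub_apply]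
      _ = (∑' k : ℕ, (C ^ k) p' q') - ∑' k : ℕ, (C ^ (k + 1)) p' q' := Summable.tsum_sub ha ha1
      _ = (C ^ 0) p' q' := by rw [Summable.tsum_eq_zero_add ha]; ring
      _ = (1 : Matrix m m ℝ) p' q' := by rw [pow_zero]
  have hinv : (1 - C)⁻¹ = S := Matrix.inv_eq_right_inv key
  rw [hinv]
  exact (hsum p q).hasSum

end Neumann

lemma calA_apply {n L : ℕ} (P : Matrix (Fin L) (Fin L) ℝ)
    (A : Fin L → Matrix (Fin n) (Fin n) ℝ) (j ℓ : Fin L) (i i' : Fin n) :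
    calA P A (j, i) (ℓ, i') = P ℓ j * A ℓ i i' := by
  simp only [calA, Matrix.mul_apply, Matrix.kroneckerMap_apply, Matrix.reindex_apply,
    Matrix.submatrix_apply, Equiv.prodComm_symm, Equiv.prodComm_apply, Prod.swap,
    Matrix.blockDiagonal_apply, Matrix.transpose_apply, Matrix.one_apply,
    Fintype.sum_prod_type]
  rw [Finset.sum_comm]
  simp [Finset.sum_ite_eq, Finset.sum_ite_eq', mul_ite, ite_mul, Finset.mul_sum]

def matProd {n L : ℕ} (A : Fin L → Matrix (Fin n) (Fin n) ℝ) :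
    ∀ k : ℕ, (Fin k → Fin L) → Matrix (Fin n) (Fin n) ℝ
  | 0, _ => 1
  | (k+1), s => A (s (Fin.last k)) * matProd A k (fun t => s t.castSucc)

lemma x_eq {n L : ℕ} {Ω : Type*} (G : ℕ → Ω → Fin L)
    (A : Fin L → Matrix (Fin n) (Fin n) ℝ) (α : ℝ)
    (x : ℕ → Ω → Fin n → ℝ) (hx0 : ∀ ω, x 0 ω = 1)
    (hx : ∀ k ω, x (k + 1) ω = α • ((A (G k ω)) *ᵥ x k ω)) :
    ∀ k ω, x k ω = α ^ k • (matProd A k (fun t : Fin k => G t ω) *ᵥ (1 : Fin n → ℝ)) := by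
  intro k
  induction k with
  | zero => intro ω; simp [matProd, hx0 ω, Matrix.one_mulVec]
  | succ k ih =>
    intro ω
    rw [hx k ω, ih ω, Matrix.mulVec_smul, smul_smul, ← pow_succ']
    congr 1
    show A (G k ω) *ᵥ _ = matProd A (k+1) (fun t : Fin (k+1) => G t ω) *ᵥ _
    rw [matProd, ← Matrix.mulVec_mulVec]
    simp [Fin.val_last, Fin.coe_castSucc]

lemma forall_fin_succ_last {k : ℕ} {Q : Fin (k + 2) → Prop} :
    (∀ t : Fin (k + 2), Q t) ↔ (Q (Fin.last (k + 1)) ∧ ∀ t : Fin (k + 1), Q t.castSucc) := by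
  constructor
  · intro h; exact ⟨h _, fun t => h _⟩
  · rintro ⟨h1, h2⟩ t
    induction t using Fin.lastCases with
    | last => exact h1
    | cast i => exact h2 i

lemma path_prob {L : ℕ} {Ω : Type*} [MeasurableSpace Ω]
    (μ : Measure Ω) [IsProbabilityMeasure μ]
    (P : Matrix (Fin L) (Fin L) ℝ) (hP : ∀ ℓ k, 0 ≤ P ℓ k)
    (G : ℕ → Ω → Fin L)
    (hMarkov : ∀ (k : ℕ) (j : Fin L) (s : Fin (k + 1) → Fin L),
      μ {ω | G (k + 1) ω = j ∧ ∀ t : Fin (k + 1), G t ω = s t}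
        = ENNReal.ofReal (P (s (Fin.last k)) j) *
            μ {ω | ∀ t : Fin (k + 1), G t ω = s t})
    (ζ0 : Fin L → ℝ) (hζ0 : ∀ ℓ, ζ0 ℓ = (μ {ω | G 0 ω = ℓ}).toReal) :
    ∀ (k : ℕ) (s : Fin (k + 1) → Fin L),
      (μ {ω | ∀ t : Fin (k + 1), G t ω = s t}).toReal
        = ζ0 (s 0) * ∏ t : Fin k, P (s t.castSucc) (s t.succ) := by
  intro k
  induction k with
  | zero =>
    intro s
    have hset : {ω | ∀ t : Fin 1, G t ω = s t} = {ω | G 0 ω = s 0} := by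
      ext ω
      simp only [Set.mem_setOf_eq]
      constructor
      · intro h; simpa using h 0
      · intro h t
        have : t = 0 := Subsingleton.elim t 0
        subst this; simpa using h
    rw [hset, ← hζ0]
    simp
  | succ k ih =>
    intro s
    set j := s (Fin.last (k + 1)) with hj
    set s' : Fin (k + 1) → Fin L := fun t => s t.castSucc with hs'
    have hset : {ω | ∀ t : Fin (k + 2), G t ω = s t}
        = {ω | G (k + 1) ω = j ∧ ∀ t : Fin (k + 1), G t ω = s' t} := by
      ext ω
      simp only [Set.mem_setOf_eq]
      rw [forall_fin_succ_last]
      simp [hs', hj, Fin.val_last, Fin.coe_castSucc]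
    rw [hset, hMarkov k j s', ENNReal.toReal_mul,
      ENNReal.toReal_ofReal (hP _ _), ih s']
    have hzero : s' 0 = s 0 := by simp [hs']
    have hprod : ∏ t : Fin (k + 1), P (s t.castSucc) (s t.succ)
        = (∏ t : Fin k, P (s' t.castSucc) (s' t.succ)) * P (s' (Fin.last k)) j := by
      rw [Fin.prod_univ_castSucc (fun t : Fin (k+1) => P (s t.castSucc) (s t.succ))]
      refine congrArg₂ (· * ·) (Finset.prod_congr rfl fun t _ => ?_) ?_
      · simp [hs', -Fin.castSucc_succ, Fin.succ_castSucc]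
      · simp [hs', hj, Fin.succ_last]
    rw [hzero, hprod]
    ring

lemma power_apply {n L : ℕ} (P : Matrix (Fin L) (Fin L) ℝ)
    (A : Fin L → Matrix (Fin n) (Fin n) ℝ) (ζ0 : Fin L → ℝ) (α : ℝ) :
    ∀ (k : ℕ) (j : Fin L) (i : Fin n),
    (((α • calA P A) ^ k) *ᵥ fun p : Fin L × Fin n => ζ0 p.1) (j, i)
      = ∑ s : Fin (k + 1) → Fin L, (if s (Fin.last k) = j then
          (α ^ k * ((matProd A k (fun t => s t.castSucc) *ᵥ (1 : Fin n → ℝ)) i))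
            * (ζ0 (s 0) * ∏ t : Fin k, P (s t.castSucc) (s t.succ)) else 0) := by
  intro k
  induction k with
  | zero =>
    intro j i
    rw [pow_zero, Matrix.one_mulVec]
    rw [← Equiv.sum_comp (Equiv.funUnique (Fin 1) (Fin L)).symm]
    simp [matProd, Matrix.one_mulVec, Finset.sum_ite_eq', Equiv.funUnique]
  | succ k ih =>
    intro j i
    -- LHS
    rw [pow_succ', ← Matrix.mulVec_mulVec]
    rw [Matrix.mulVec]
    show ∑ p : Fin L × Fin n, (α • calA P A) (j, i) p * _ = _
    rw [Fintype.sum_prod_type]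
    -- RHS via snoc decomposition
    rw [← Equiv.sum_comp (Fin.snocEquiv (fun _ : Fin (k + 2) => Fin L))]
    rw [Fintype.sum_prod_type]
    simp only [Fin.snocEquiv_apply, Fin.snoc_last, Fin.snoc_castSucc]
    -- RHS: eliminate the x (= last state) sum using the ite
    conv_rhs => rw [Finset.sum_comm]
    simp only [Finset.sum_ite_eq', Finset.mem_univ, if_true]
    -- LHS: substitute ih and expand
    simp only [ih, Matrix.smul_apply, calA_apply, smul_eq_mul, Finset.mul_sum, mul_ite, mul_zero]
    -- reorder sums: x, y, x1  ↦  x1, y, x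
    have reorder : ∀ (F : Fin L → Fin n → (Fin (k + 1) → Fin L) → ℝ),
        (∑ x : Fin L, ∑ y : Fin n, ∑ x1 : Fin (k + 1) → Fin L, F x y x1)
          = ∑ x1 : Fin (k + 1) → Fin L, ∑ y : Fin n, ∑ x : Fin L, F x y x1 := by
      intro F
      rw [Finset.sum_comm]
      refine (Finset.sum_congr rfl fun y _ => Finset.sum_comm).trans ?_
      rw [Finset.sum_comm]
    rw [reorder]
    simp only [Finset.sum_ite_eq, Finset.mem_univ, if_true]
    -- pointwise in x1
    refine Finset.sum_congr rfl fun x1 _ => ?_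
    have hz : (Fin.snoc x1 j : Fin (k + 2) → Fin L) 0 = x1 0 := by
      rw [← Fin.castSucc_zero, Fin.snoc_castSucc]
    have hprod : ∏ t : Fin (k + 1), P (x1 t) ((Fin.snoc x1 j : Fin (k + 2) → Fin L) t.succ)
        = (∏ t : Fin k, P (x1 t.castSucc) (x1 t.succ)) * P (x1 (Fin.last k)) j := by
      rw [Fin.prod_univ_castSucc
        (fun t : Fin (k + 1) => P (x1 t) ((Fin.snoc x1 j : Fin (k + 2) → Fin L) t.succ))]
      refine congrArg₂ (· * ·) (Finset.prod_congr rfl fun t _ => ?_) ?_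
      · rw [Fin.succ_castSucc, Fin.snoc_castSucc]
      · rw [Fin.succ_last, Fin.snoc_last]
    rw [hz, hprod]
    have hmv : ((matProd A (k + 1) fun t => x1 t) *ᵥ (1 : Fin n → ℝ)) i
        = ∑ y : Fin n, A (x1 (Fin.last k)) i y
            * ((matProd A k fun t => x1 t.castSucc) *ᵥ (1 : Fin n → ℝ)) y := by
      show (matProd A (k + 1) x1 *ᵥ (1 : Fin n → ℝ)) i = _
      rw [matProd, ← Matrix.mulVec_mulVec]
      rfl
    rw [hmv, Finset.mul_sum, Finset.sum_mul]
    refine Finset.sum_congr rfl fun y _ => ?_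
    ring


/-- Katz centrality of a Markovian temporal network: if $\alpha\rho(\mathcal A)<1$,
then $v=\sum_k E[x(k)]$ exists and equals
$(\mathbf 1_L^\top\otimes I_n)(I-\alpha\mathcal A)^{-1}(\zeta_0\otimes\mathbf 1_n)$. -/
theorem stmt11 {n L : ℕ} {Ω : Type*} [MeasurableSpace Ω]
    (μ : Measure Ω) [IsProbabilityMeasure μ]
    (P : Matrix (Fin L) (Fin L) ℝ)
    (hP : ∀ ℓ k, 0 ≤ P ℓ k) (hProw : ∀ ℓ, ∑ k, P ℓ k = 1)
    (G : ℕ → Ω → Fin L) (hG : ∀ k, Measurable (G k))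
    (hMarkov : ∀ (k : ℕ) (j : Fin L) (s : Fin (k + 1) → Fin L),
      μ {ω | G (k + 1) ω = j ∧ ∀ t : Fin (k + 1), G t ω = s t}
        = ENNReal.ofReal (P (s (Fin.last k)) j) *
            μ {ω | ∀ t : Fin (k + 1), G t ω = s t})
    (A : Fin L → Matrix (Fin n) (Fin n) ℝ) (hA : ∀ ℓ i j, 0 ≤ A ℓ i j)
    (α : ℝ) (hα : 0 < α) (hρ : α * specRad (calA P A) < 1)
    (x : ℕ → Ω → Fin n → ℝ)
    (hx0 : ∀ ω, x 0 ω = 1)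
    (hx : ∀ k ω, x (k + 1) ω = α • ((A (G k ω)) *ᵥ x k ω))
    (ζ0 : Fin L → ℝ) (hζ0 : ∀ ℓ, ζ0 ℓ = (μ {ω | G 0 ω = ℓ}).toReal) :
    HasSum (fun k : ℕ => fun i : Fin n => ∫ ω, x k ω i ∂μ)
      (fun i : Fin n =>
        ∑ ℓ : Fin L,
          ((1 - α • calA P A)⁻¹ *ᵥ fun p : Fin L × Fin n => ζ0 p.1) (ℓ, i)) := by
  classical
  set B := calA P A with hB
  set v : Fin L × Fin n → ℝ := fun p => ζ0 p.1 with hv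
  have hmeas : ∀ (k : ℕ) (s : Fin k → Fin L),
      MeasurableSet {ω | ∀ t : Fin k, G t ω = s t} := by
    intro k s
    have hs : {ω | ∀ t : Fin k, G t ω = s t} = ⋂ t : Fin k, (G t) ⁻¹' {s t} := by
      ext ω; simp [Set.mem_iInter]
    rw [hs]
    exact MeasurableSet.iInter fun t => (hG t) (measurableSet_singleton _)
  have hxdec : ∀ (k : ℕ) (ω : Ω) (i : Fin n), x k ω i
      = ∑ s : Fin (k + 1) → Fin L,
          Set.indicator {ω' | ∀ t : Fin (k + 1), G t ω' = s t}
            (fun _ => α ^ k * ((matProd A k fun t => s t.castSucc) *ᵥ (1 : Fin n → ℝ)) i)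
            ω := by
    intro k ω i
    rw [Finset.sum_eq_single (fun t : Fin (k + 1) => G t ω)]
    · rw [Set.indicator_of_mem (by exact fun t => rfl)]
      rw [x_eq G A α x hx0 hx k ω]
      have harg : (fun t : Fin k => G ((t.castSucc : Fin (k + 1)) : ℕ) ω)
          = fun t : Fin k => G t ω := by
        funext t; rw [Fin.coe_castSucc]
      simp only [Pi.smul_apply, smul_eq_mul]
      rw [harg]
    · intro s _ hne
      apply Set.indicator_of_notMem
      intro hmem
      exact hne (funext fun t => (hmem t).symm)
    · intro h; exact absurd (Finset.mem_univ _) h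
  have hint : ∀ (k : ℕ) (i : Fin n),
      ∫ ω, x k ω i ∂μ
        = ∑ s : Fin (k + 1) → Fin L,
            (α ^ k * ((matProd A k fun t => s t.castSucc) *ᵥ (1 : Fin n → ℝ)) i)
              * (ζ0 (s 0) * ∏ t : Fin k, P (s t.castSucc) (s t.succ)) := by
    intro k i
    have h1 : ∫ ω, x k ω i ∂μ
        = ∫ ω, (∑ s : Fin (k + 1) → Fin L,
            Set.indicator {ω' | ∀ t : Fin (k + 1), G t ω' = s t}
              (fun _ => α ^ k * ((matProd A k fun t => s t.castSucc) *ᵥ (1 : Fin n → ℝ)) i)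
              ω) ∂μ :=
      integral_congr_ae (Filter.Eventually.of_forall fun ω => hxdec k ω i)
    rw [h1, integral_finset_sum _ (fun s _ =>
      (integrable_indicator_iff (hmeas _ s)).2
        (integrableOn_const (measure_lt_top μ _).ne))]
    refine Finset.sum_congr rfl fun s _ => ?_
    rw [integral_indicator_const _ (hmeas _ s), smul_eq_mul, measureReal_def,
      path_prob μ P hP G hMarkov ζ0 hζ0 k s]
    ring
  have hexp : ∀ (k : ℕ) (i : Fin n),
      ∫ ω, x k ω i ∂μ = ∑ j : Fin L, (((α • B) ^ k) *ᵥ v) (j, i) := by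
    intro k i
    rw [hint k i]
    have h1 : ∑ j : Fin L, (((α • B) ^ k) *ᵥ v) (j, i)
        = ∑ j : Fin L, ∑ s : Fin (k + 1) → Fin L, (if s (Fin.last k) = j then
            (α ^ k * ((matProd A k fun t => s t.castSucc) *ᵥ (1 : Fin n → ℝ)) i)
              * (ζ0 (s 0) * ∏ t : Fin k, P (s t.castSucc) (s t.succ)) else 0) :=
      Finset.sum_congr rfl fun j _ => power_apply P A ζ0 α k j i
    rw [h1, Finset.sum_comm]
    refine Finset.sum_congr rfl fun s _ => ?_
    rw [Finset.sum_ite_eq]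
    simp
  refine Pi.hasSum.2 fun i => ?_
  have hfun : (fun k : ℕ => ∫ ω, x k ω i ∂μ)
      = fun k : ℕ => ∑ j : Fin L, ∑ p : Fin L × Fin n, ((α • B) ^ k) (j, i) p * v p := by
    funext k
    rw [hexp k i]
    rfl
  have htarget : (∑ ℓ : Fin L, ((1 - α • B)⁻¹ *ᵥ v) (ℓ, i))
      = ∑ ℓ : Fin L, ∑ p : Fin L × Fin n, (1 - α • B)⁻¹ (ℓ, i) p * v p :=
    Finset.sum_congr rfl fun ℓ _ => rfl
  rw [hfun, htarget]
  exact hasSum_sum fun j _ =>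
    hasSum_sum fun p _ => (neumann_inv B α hα hρ (j, i) p).mul_right (v p)
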